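/- arXiv:1601.06122 — 4 statements merged into one kernel-verified Lean document; each statement's English description precedes it below -/
import Mathlib

section
/- For q in ℂ with (q;q)_j ≠ 0 for all j ≤ n, the monomial x^n admits the inversion formula x^n = [b_s;q]_n / [a_r;q]_n · ((-1)^n q^{n(n-1)/2})^{r-s} · ∑_{k=0}^{n} (-1)^k [n choose k]_q q^{k(k-1)/2} · P_k(x), where P_k(x) = ∑_{j=0}^{k} ((q^{-k};q)_j [a_r;q]_j / ([b_s;q]_j (q;q)_j)) ((-1)^j q^{j(j-1)/2})^{s-r} (qx)^j is the basic hypergeometric polynomial {}_{r+1}φ_s(q^{-k},(a_r);(b_s); q; qx). This is an identity of polynomials in x, assuming the parameters a_1,…,a_r, b_1,…,b_s are such that all relevant q-shifted factorials are nonzero. -/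
open Finset

/-- q-shifted factorial `(a;q)_n = ∏_{j=0}^{n-1} (1 - a q^j)`. -/
noncomputable def qPoch (a q : ℂ) (n : ℕ) : ℂ :=
  ∏ j ∈ Finset.range n, (1 - a * q ^ j)

/-- Gaussian (q-binomial) coefficient. -/
noncomputable def qBinom (q : ℂ) (n k : ℕ) : ℂ :=
  qPoch q q n / (qPoch q q k * qPoch q q (n - k))

lemma qPoch_zero (a q : ℂ) : qPoch a q 0 = 1 := by simp [qPoch]

lemma qPoch_succ (a q : ℂ) (k : ℕ) :
    qPoch a q (k+1) = qPoch a q k * (1 - a * q ^ k) := by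
  simp [qPoch, Finset.prod_range_succ]

lemma qPoch_q_succ (q : ℂ) (k : ℕ) :
    qPoch q q (k+1) = qPoch q q k * (1 - q ^ (k+1)) := by
  rw [qPoch_succ]; ring

lemma qPoch_ne_zero_mono {a q : ℂ} {n : ℕ} (h : qPoch a q n ≠ 0) {m : ℕ} (hm : m ≤ n) :
    qPoch a q m ≠ 0 := by
  have key : qPoch a q m * ∏ j ∈ Finset.Ico m n, (1 - a * q ^ j) = qPoch a q n := by
    rw [qPoch, qPoch, Finset.prod_range_mul_prod_Ico _ hm]
  intro h0
  apply h
  rw [← key, h0, zero_mul]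

lemma choose_two_succ (m : ℕ) : (m+1).choose 2 = m.choose 2 + m := by
  rw [Nat.choose_succ_succ]
  simp [Nat.choose_one_right]
  omega

lemma choose_two_add (j m : ℕ) : (j+m).choose 2 = j.choose 2 + m.choose 2 + j*m := by
  induction m with
  | zero => simp
  | succ m ih =>
    have h1 := choose_two_succ (j+m)
    have h2 := choose_two_succ m
    have : j + (m+1) = (j+m)+1 := by omega
    rw [this, h1, ih, h2]
    ring

lemma two_mul_choose_two (j : ℕ) : 2 * j.choose 2 + j = j * j := by
  induction j with
  | zero => simp
  | succ j ih =>
    rw [choose_two_succ]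
    nlinarith [ih]

lemma hyp_poch (q : ℂ) (hq0 : q ≠ 0) (k j : ℕ) (hjk : j ≤ k) :
    qPoch ((q^k)⁻¹) q j * (qPoch q q (k - j) * q^(k*j)) =
      (-1)^j * q^(j.choose 2) * qPoch q q k := by
  induction j with
  | zero => simp [qPoch]
  | succ j ih =>
    have hj : j ≤ k := by omega
    have hQ : qPoch q q (k - j) = qPoch q q (k - (j+1)) * (1 - q^(k-j)) := by
      have h1 : k - j = (k - (j+1)) + 1 := by omega
      have h2 : k - (j+1) + 1 = k - j := by omega
      rw [h1, qPoch_q_succ, h2]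
    have key : (1 - (q^k)⁻¹ * q^j) * q^(k-j) = -(q^(k-j) * (q^k)⁻¹ * q^j) * (1 - q^(k-j)) := by
      have hkj : q^(k-j) * q^j = q^k := by rw [← pow_add]; congr 1; omega
      field_simp
      linear_combination (-1 : ℂ) * hkj
    have hkj2 : q^(k-j) * (q^k)⁻¹ * q^j = 1 := by
      have hkj : q^(k-j) * q^j = q^k := by rw [← pow_add]; congr 1; omega
      field_simp [hkj]
      exact hkj
    rw [qPoch_succ]
    have e1 : k * (j+1) = k*j + (k-j) + j := by rw [Nat.mul_succ]; omega
    rw [e1, pow_add, pow_add]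
    calc qPoch ((q^k)⁻¹) q j * (1 - (q^k)⁻¹ * q^j) * (qPoch q q (k-(j+1)) * (q^(k*j) * q^(k-j) * q^j))
        = qPoch ((q^k)⁻¹) q j * q^(k*j) * (qPoch q q (k-(j+1)) * ((1 - (q^k)⁻¹ * q^j) * q^(k-j))) * q^j := by ring
      _ = qPoch ((q^k)⁻¹) q j * q^(k*j) * (qPoch q q (k-(j+1)) * (-(q^(k-j) * (q^k)⁻¹ * q^j) * (1 - q^(k-j)))) * q^j := by rw [key]
      _ = -(q^(k-j) * (q^k)⁻¹ * q^j) * (qPoch ((q^k)⁻¹) q j * (qPoch q q (k - j) * q^(k*j))) * q^j := by rw [hQ]; ring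
      _ = -(1 : ℂ) * ((-1)^j * q^(j.choose 2) * qPoch q q k) * q^j := by rw [hkj2, ih hj]
      _ = (-1)^(j+1) * q^((j+1).choose 2) * qPoch q q k := by
          rw [choose_two_succ, pow_add, pow_add]; ring

lemma one_sub_pow_ne (q : ℂ) {m : ℕ} (h : qPoch q q (m+1) ≠ 0) : (1 - q^(m+1)) ≠ 0 := by
  rw [qPoch_q_succ] at h
  exact fun h0 => h (by rw [h0, mul_zero])

lemma pascal (q : ℂ) (N m : ℕ) (hm : m + 1 ≤ N) (hQ : ∀ k ≤ N+1, qPoch q q k ≠ 0) :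
    qPoch q q (N+1) / (qPoch q q (m+1) * qPoch q q (N+1-(m+1))) =
      qPoch q q N / (qPoch q q (m+1) * qPoch q q (N-(m+1))) +
        q^(N-m) * (qPoch q q N / (qPoch q q m * qPoch q q (N-m))) := by
  obtain ⟨v, rfl⟩ : ∃ v, N = m + 1 + v := ⟨N - (m+1), by omega⟩
  rw [show m+1+v+1-(m+1) = v+1 from by omega, show m+1+v-(m+1) = v from by omega,
      show m+1+v-m = v+1 from by omega, show m+1+v+1 = (m+v+1)+1 from by omega,
      show m+1+v = (m+v)+1 from by omega]
  have hQm : qPoch q q m ≠ 0 := hQ m (by omega)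
  have hQv : qPoch q q v ≠ 0 := hQ v (by omega)
  have hQmv : qPoch q q (m+v+1) ≠ 0 := hQ (m+v+1) (by omega)
  have h1 : (1 - q^(m+1)) ≠ 0 := one_sub_pow_ne q (hQ (m+1) (by omega))
  have h2 : (1 - q^(v+1)) ≠ 0 := one_sub_pow_ne q (hQ (v+1) (by omega))
  rw [qPoch_q_succ q (m+v+1), qPoch_q_succ q m, qPoch_q_succ q v]
  field_simp
  ring

lemma Gsum (q : ℂ) (N : ℕ) (hQ : ∀ k ≤ N, qPoch q q k ≠ 0) :
    ∑ m ∈ Finset.range (N+1),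
      (-1:ℂ)^m * q^(m.choose 2) * (qPoch q q N / (qPoch q q m * qPoch q q (N-m)))
    = if N = 0 then 1 else 0 := by
  induction N with
  | zero => norm_num [qPoch_zero]
  | succ N ih =>
    have hQ' : ∀ k ≤ N, qPoch q q k ≠ 0 := fun k hk => hQ k (by omega)
    have hGN := ih hQ'
    set g : ℕ → ℂ := fun m =>
      (-1:ℂ)^m * q^(m.choose 2) * (qPoch q q N / (qPoch q q m * qPoch q q (N-m))) with hg
    set G : ℂ := ∑ m ∈ Finset.range (N+1), g m with hG
    have hQN : qPoch q q N ≠ 0 := hQ' N le_rfl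
    have g0 : g 0 = 1 := by
      simp [hg, qPoch_zero, div_self hQN]
    have gN : g N = (-1:ℂ)^N * q^(N.choose 2) := by
      simp [hg, qPoch_zero, div_self hQN]
    have e1 : ∀ i ∈ Finset.range N,
        (-1:ℂ)^(i+1) * q^((i+1).choose 2) *
          (qPoch q q (N+1) / (qPoch q q (i+1) * qPoch q q (N+1-(i+1)))) =
        g (i+1) + (-q^N) * g i := by
      intro i hi
      have hi' : i + 1 ≤ N := Finset.mem_range.mp hi
      rw [pascal q N i hi' hQ]
      have hpow : q^((i+1).choose 2) * q^(N-i) = q^(i.choose 2) * q^N := by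
        rw [← pow_add, ← pow_add]
        congr 1
        have := choose_two_succ i
        omega
      simp only [hg]
      linear_combination ((-1:ℂ)^(i+1) * (qPoch q q N / (qPoch q q i * qPoch q q (N-i)))) * hpow
    have hQN1 : qPoch q q (N+1) ≠ 0 := hQ (N+1) le_rfl
    have s2 : ∑ i ∈ Finset.range N, g (i+1) = G - g 0 := by
      rw [hG, Finset.sum_range_succ']; ring
    have s3 : ∑ i ∈ Finset.range N, g i = G - g N := by
      rw [hG, Finset.sum_range_succ]; ring
    have f0 : (-1:ℂ)^0 * q^(Nat.choose 0 2) *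
        (qPoch q q (N+1) / (qPoch q q 0 * qPoch q q (N+1-0))) = 1 := by
      simp [qPoch_zero, div_self hQN1]
    have fN1 : (-1:ℂ)^(N+1) * q^((N+1).choose 2) *
        (qPoch q q (N+1) / (qPoch q q (N+1) * qPoch q q (N+1-(N+1)))) =
        -((-1:ℂ)^N * q^(N.choose 2) * q^N) := by
      rw [show N+1-(N+1) = 0 from by omega, qPoch_zero, mul_one, div_self hQN1,
        choose_two_succ, pow_add, pow_succ]
      ring
    rw [if_neg (Nat.succ_ne_zero N), Finset.sum_range_succ, Finset.sum_range_succ',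
        Finset.sum_congr rfl e1, Finset.sum_add_distrib, ← Finset.mul_sum, s2, s3, g0, gN, hGN]
    by_cases hN : N = 0
    · subst hN
      rw [if_pos rfl]
      linear_combination f0 + fN1
    · rw [if_neg hN]
      linear_combination f0 + fN1

lemma hyp_poch_div (q : ℂ) (hq0 : q ≠ 0) (k j : ℕ) (hjk : j ≤ k)
    (hQkj : qPoch q q (k-j) ≠ 0) :
    qPoch ((q^k)⁻¹) q j =
      (-1)^j * q^(j.choose 2) * qPoch q q k / (qPoch q q (k-j) * q^(k*j)) := by
  rw [eq_div_iff (mul_ne_zero hQkj (pow_ne_zero _ hq0))]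
  linear_combination hyp_poch q hq0 k j hjk

lemma innerSumEval (q : ℂ) (hq0 : q ≠ 0) (n j : ℕ) (hj : j ≤ n)
    (hQ : ∀ k ≤ n, qPoch q q k ≠ 0) :
    ∑ k ∈ Finset.Ico j (n+1),
      (-1:ℂ)^k * (qPoch q q n / (qPoch q q k * qPoch q q (n-k))) * q^(k.choose 2) *
        qPoch ((q^k)⁻¹) q j
    = if j = n then qPoch q q n / q^n else 0 := by
  rw [Finset.sum_Ico_eq_sum_range, show n+1-j = (n-j)+1 from by omega]
  have e : ∀ m ∈ Finset.range ((n-j)+1),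
      (-1:ℂ)^(j+m) * (qPoch q q n / (qPoch q q (j+m) * qPoch q q (n-(j+m)))) *
        q^((j+m).choose 2) * qPoch ((q^(j+m))⁻¹) q j
      = (qPoch q q n / (qPoch q q (n-j) * q^j)) *
          ((-1:ℂ)^m * q^(m.choose 2) *
            (qPoch q q (n-j) / (qPoch q q m * qPoch q q ((n-j)-m)))) := by
    intro m hm
    have hm' : m ≤ n - j := by have := Finset.mem_range.mp hm; omega
    have hsub : (j+m) - j = m := by omega
    rw [hyp_poch_div q hq0 (j+m) j (by omega) (by rw [hsub]; exact hQ m (by omega)), hsub,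
      show n - (j+m) = (n-j) - m from by omega]
    have key : q^((j+m).choose 2) * q^(j.choose 2) * q^j = q^((j+m)*j) * q^(m.choose 2) := by
      rw [← pow_add, ← pow_add, ← pow_add]
      congr 1
      have h1 := choose_two_add j m
      have h2 := two_mul_choose_two j
      have h3 : (j+m)*j = j*j + j*m := by ring
      omega
    have sign : ((-1:ℂ))^(j+m) * (-1)^j = (-1)^m := by
      rw [← pow_add, show j+m+j = 2*j+m from by omega, pow_add, pow_mul]
      norm_num
    have hQjm : qPoch q q (j+m) ≠ 0 := hQ (j+m) (by omega)
    have hQm : qPoch q q m ≠ 0 := hQ m (by omega)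
    have hQnj : qPoch q q (n-j) ≠ 0 := hQ (n-j) (by omega)
    have hQnjm : qPoch q q ((n-j)-m) ≠ 0 := hQ ((n-j)-m) (by omega)
    field_simp
    ring_nf
    have neg1 : ((-1:ℂ))^(j*2) = 1 := by rw [mul_comm, pow_mul]; norm_num
    rw [neg1, mul_one]
    linear_combination (qPoch q q n * (-1:ℂ)^m) * key
  rw [Finset.sum_congr rfl e, ← Finset.mul_sum, Gsum q (n-j) (fun k hk => hQ k (by omega))]
  by_cases hjn : j = n
  · subst hjn
    simp [qPoch_zero]
  · rw [if_neg (by omega : ¬ n - j = 0), if_neg hjn, mul_zero]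

/-- inversion formula for basic hypergeometric polynomials
`P_k(x) = {}_{r+1}φ_s(q^{-k},(a_r);(b_s);q;qx)`:
`x^n = ([b_s;q]_n/[a_r;q]_n) ((-1)^n q^{n(n-1)/2})^{r-s}
       ∑_{k=0}^n (-1)^k [n choose k]_q q^{k(k-1)/2} P_k(x)`. -/
theorem inversion_basic_hypergeometric (q : ℂ) (n : ℕ) (r s : ℕ)
    (a : Fin r → ℂ) (b : Fin s → ℂ)
    (hq0 : q ≠ 0) (hq1 : ∀ j, 1 ≤ j → j ≤ n → q ^ j ≠ 1)
    (ha : ∀ i, qPoch (a i) q n ≠ 0) (hb : ∀ i, qPoch (b i) q n ≠ 0) (x : ℂ) :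
    x ^ n =
      ((∏ i, qPoch (b i) q n) / (∏ i, qPoch (a i) q n)) *
        ((-1) ^ n * q ^ (n * (n - 1) / 2)) ^ ((r : ℤ) - (s : ℤ)) *
        ∑ k ∈ Finset.range (n + 1), (-1) ^ k * qBinom q n k * q ^ (k * (k - 1) / 2) *
          (∑ j ∈ Finset.range (k + 1),
            (qPoch ((q ^ k)⁻¹) q j * ∏ i, qPoch (a i) q j) /
              ((∏ i, qPoch (b i) q j) * qPoch q q j) *
              ((-1) ^ j * q ^ (j * (j - 1) / 2)) ^ ((s : ℤ) - (r : ℤ)) * (q * x) ^ j) := by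
  have hQ : ∀ k ≤ n, qPoch q q k ≠ 0 := by
    intro k hk
    rw [qPoch]
    apply Finset.prod_ne_zero_iff.mpr
    intro i hi
    intro h0
    apply hq1 (i+1) (by omega) (by have := Finset.mem_range.mp hi; omega)
    rw [pow_succ']
    linear_combination -h0
  simp only [← Nat.choose_two_right]
  set c : ℕ → ℂ := fun j => (∏ i, qPoch (a i) q j) / ((∏ i, qPoch (b i) q j) * qPoch q q j) *
    ((-1:ℂ)^j * q^(j.choose 2)) ^ ((s:ℤ) - (r:ℤ)) * (q*x)^j with hc
  have main1 :
      ∑ k ∈ Finset.range (n + 1), (-1:ℂ)^k * qBinom q n k * q^(k.choose 2) *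
        (∑ j ∈ Finset.range (k + 1),
          (qPoch ((q^k)⁻¹) q j * ∏ i, qPoch (a i) q j) /
            ((∏ i, qPoch (b i) q j) * qPoch q q j) *
            ((-1:ℂ)^j * q^(j.choose 2)) ^ ((s:ℤ) - (r:ℤ)) * (q*x)^j)
      = c n * (qPoch q q n / q^n) := by
    have h1 : ∀ k ∈ Finset.range (n+1),
        (-1:ℂ)^k * qBinom q n k * q^(k.choose 2) *
          (∑ j ∈ Finset.range (k + 1),
            (qPoch ((q^k)⁻¹) q j * ∏ i, qPoch (a i) q j) /
              ((∏ i, qPoch (b i) q j) * qPoch q q j) *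
              ((-1:ℂ)^j * q^(j.choose 2)) ^ ((s:ℤ) - (r:ℤ)) * (q*x)^j)
        = ∑ j ∈ Finset.range (k+1),
            (-1:ℂ)^k * qBinom q n k * q^(k.choose 2) * (qPoch ((q^k)⁻¹) q j * c j) := by
      intro k hk
      rw [Finset.mul_sum]
      refine Finset.sum_congr rfl fun j hj => ?_
      simp only [hc]
      ring
    rw [Finset.sum_congr rfl h1]
    simp only [Finset.range_eq_Ico]
    rw [← Finset.sum_Ico_Ico_comm]
    have h2 : ∀ j ∈ Finset.Ico 0 (n+1),
        (∑ k ∈ Finset.Ico j (n+1),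
          (-1:ℂ)^k * qBinom q n k * q^(k.choose 2) * (qPoch ((q^k)⁻¹) q j * c j))
        = if j = n then c n * (qPoch q q n / q^n) else 0 := by
      intro j hj
      have hj' : j ≤ n := by have := Finset.mem_Ico.mp hj; omega
      have e : ∑ k ∈ Finset.Ico j (n+1),
          (-1:ℂ)^k * qBinom q n k * q^(k.choose 2) * (qPoch ((q^k)⁻¹) q j * c j)
        = (∑ k ∈ Finset.Ico j (n+1),
            (-1:ℂ)^k * (qPoch q q n / (qPoch q q k * qPoch q q (n-k))) * q^(k.choose 2) *
              qPoch ((q^k)⁻¹) q j) * c j := by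
        rw [Finset.sum_mul]
        refine Finset.sum_congr rfl fun k hk => ?_
        simp only [qBinom]
        ring
      rw [e, innerSumEval q hq0 n j hj' hQ]
      split_ifs with h
      · subst h; ring
      · rw [zero_mul]
    rw [Finset.sum_congr rfl h2, Finset.sum_ite_eq' (Finset.Ico 0 (n+1)) n
      (fun _ => c n * (qPoch q q n / q^n)), if_pos (by simp)]
  rw [main1, hc]
  have hQn : qPoch q q n ≠ 0 := hQ n le_rfl
  have hAn : (∏ i, qPoch (a i) q n) ≠ 0 :=
    Finset.prod_ne_zero_iff.mpr fun i _ => ha i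
  have hBn : (∏ i, qPoch (b i) q n) ≠ 0 :=
    Finset.prod_ne_zero_iff.mpr fun i _ => hb i
  have hbase : ((-1:ℂ)^n * q^(n.choose 2)) ≠ 0 :=
    mul_ne_zero (pow_ne_zero _ (by norm_num)) (pow_ne_zero _ hq0)
  have hzp : ((-1:ℂ)^n * q^(n.choose 2)) ^ ((r:ℤ)-(s:ℤ)) *
      ((-1:ℂ)^n * q^(n.choose 2)) ^ ((s:ℤ)-(r:ℤ)) = 1 := by
    rw [← zpow_add₀ hbase]
    norm_num
  have hqn : (q:ℂ)^n ≠ 0 := pow_ne_zero _ hq0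
  field_simp
  linear_combination (- x^n * q^n) * hzp
end

section
/- Let {P_n} be a monic polynomial set expanded as P_n(x) = ∑_{k=0}^n A_k(n) B_{n−k}(x) in a basis {B_n} of monic polynomials of degree n (so A_0(n) = 1). Define b_0(n,0) = 1, b_0(n,k) = 0 for k ≥ 1, and b_{m+1}(n,k) = b_m(n,k+1) − b_m(n,0) A_{k+1}(n−m) for 0 ≤ m ≤ n−1, 0 ≤ k ≤ n−m−1. Then B_n(x) = ∑_{m=0}^n b_m(n,0) P_{n−m}(x). -/
open Finset Polynomial

/-- Ben Romdhane's inversion theorem: let `{P_n}` be monic of degree `n`,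
expanded as `P_n = ∑_{k=0}^n A_k(n) B_{n-k}` in a basis of monic polynomials `B_n` of
degree `n` (so `A_0(n) = 1`).  Define `b_0(n,0) = 1`, `b_0(n,k) = 0` for `k ≥ 1`, and
`b_{m+1}(n,k) = b_m(n,k+1) − b_m(n,0) A_{k+1}(n−m)` for `0 ≤ m ≤ n−1`, `0 ≤ k ≤ n−m−1`.
Then `B_n = ∑_{m=0}^n b_m(n,0) P_{n−m}`. -/
theorem inversion_recurrence {F : Type*} [Field F]
    (P B : ℕ → Polynomial F) (A : ℕ → ℕ → F) (b : ℕ → ℕ → ℕ → F)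
    (hPmonic : ∀ n, (P n).Monic) (hPdeg : ∀ n, (P n).natDegree = n)
    (hBmonic : ∀ n, (B n).Monic) (hBdeg : ∀ n, (B n).natDegree = n)
    (hA0 : ∀ n, A 0 n = 1)
    (hexp : ∀ n, P n = ∑ k ∈ Finset.range (n + 1), A k n • B (n - k))
    (hb00 : ∀ n, b 0 n 0 = 1)
    (hb0k : ∀ n k, 1 ≤ k → b 0 n k = 0)
    (hbrec : ∀ n m k, m ≤ n - 1 → k ≤ n - m - 1 →
      b (m + 1) n k = b m n (k + 1) - b m n 0 * A (k + 1) (n - m)) :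
    ∀ n, B n = ∑ m ∈ Finset.range (n + 1), b m n 0 • P (n - m) := by
  intro n
  -- auxiliary claim by induction on m
  have key : ∀ m, m ≤ n → B n = (∑ j ∈ Finset.range m, b j n 0 • P (n - j)) +
      ∑ k ∈ Finset.range (n - m + 1), b m n k • B (n - m - k) := by
    intro m
    induction m with
    | zero =>
      intro _
      simp only [Finset.range_zero, Finset.sum_empty, Nat.sub_zero, zero_add]
      rw [Finset.sum_eq_single 0]
      · simp [hb00]
      · intro k _ hk
        rw [hb0k n k (Nat.one_le_iff_ne_zero.mpr hk), zero_smul]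
      · intro h; simp at h
    | succ m ih =>
      intro hm
      have hm' : m ≤ n := Nat.le_of_succ_le hm
      rw [ih hm']
      have step : ∑ k ∈ Finset.range (n - m + 1), b m n k • B (n - m - k)
          = b m n 0 • P (n - m) +
            ∑ k ∈ Finset.range (n - (m + 1) + 1), b (m + 1) n k • B (n - (m + 1) - k) := by
        have hnm : n - (m + 1) + 1 = n - m := by omega
        rw [hnm, hexp (n - m), Finset.smul_sum, Finset.sum_range_succ',
          Finset.sum_range_succ']
        simp only [Nat.sub_zero, hA0, smul_smul, mul_one]
        have hterm : ∀ k ∈ Finset.range (n - m), b (m + 1) n k • B (n - (m + 1) - k)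
            = (b m n (k + 1) - b m n 0 * A (k + 1) (n - m)) • B (n - m - (k + 1)) := by
          intro k hk
          rw [Finset.mem_range] at hk
          rw [hbrec n m k (by omega) (by omega)]
          congr 2
          omega
        rw [Finset.sum_congr rfl hterm]
        rw [add_right_comm, ← Finset.sum_add_distrib]
        congr 1
        apply Finset.sum_congr rfl
        intro k _
        rw [← add_smul]
        ring_nf
      rw [step, Finset.sum_range_succ (f := fun j => b j n 0 • P (n - j)) (n := m)]
      abel
  have h := key n le_rfl
  have hB0 : B 0 = 1 := (Polynomial.Monic.natDegree_eq_zero (hBmonic 0)).mp (hBdeg 0)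
  have hP0 : P 0 = 1 := (Polynomial.Monic.natDegree_eq_zero (hPmonic 0)).mp (hPdeg 0)
  have e : ∑ k ∈ Finset.range (n - n + 1), b n n k • B (n - n - k) = b n n 0 • P (n - n) := by
    rw [Nat.sub_self]
    simp [hB0, hP0]
  rw [h, e, ← Finset.sum_range_succ]
end

section
/- The generalized hypergeometric inversion holds: for parameters (a_r), (b_s) ∈ ℂ with (a_i)_n ≠ 0 and (b_i)_n ≠ 0, x^n = ((b_1)_n ⋯ (b_s)_n / ((a_1)_n ⋯ (a_r)_n)) · ∑_{m=0}^{n} C(n,m) (−1)^m F_m(x), where F_m(x) = ∑_{j=0}^{m} ((−m)_j (a_1)_j ⋯ (a_r)_j / ((b_1)_j ⋯ (b_s)_j · j!)) x^j is the terminating hypergeometric polynomial {}_{r+1}F_s(−m,(a_r);(b_s);x), and (λ)_j = λ(λ+1)⋯(λ+j−1) is the Pochhammer symbol. This is an identity of polynomials in x. -/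
open Finset

/-- Pochhammer symbol `(λ)_j = ∏_{i=0}^{j-1} (λ + i)`. -/
noncomputable def poch (l : ℂ) (j : ℕ) : ℂ :=
  ∏ i ∈ Finset.range j, (l + i)

lemma poch_neg_nat (m j : ℕ) :
    poch (-(m : ℂ)) j = (-1) ^ j * (m.descFactorial j : ℂ) := by
  induction j with
  | zero => simp [poch]
  | succ j ih =>
    rw [poch, Finset.prod_range_succ, ← poch, ih, Nat.descFactorial_succ]
    rcases le_or_gt j m with h | h
    · push_cast [h]
      ring
    · rw [Nat.descFactorial_eq_zero_iff_lt.2 h]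
      simp [pow_succ]

lemma nat_key (n j k : ℕ) (h : j + k ≤ n) :
    n.choose (j + k) * (j + k).descFactorial j = n.descFactorial j * (n - j).choose k := by
  rw [Nat.descFactorial_eq_factorial_mul_choose, Nat.descFactorial_eq_factorial_mul_choose,
    Nat.mul_left_comm, Nat.choose_mul (Nat.le_add_right j k), Nat.add_sub_cancel_left,
    Nat.mul_assoc]

lemma alt_sum (N : ℕ) :
    ∑ m ∈ Finset.range (N + 1), (-1 : ℂ) ^ m * (N.choose m : ℂ) =
      if N = 0 then 1 else 0 := by
  have h := Int.alternating_sum_range_choose (n := N)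
  have := congrArg (Int.cast : ℤ → ℂ) h
  push_cast at this
  rw [this]

lemma key (n j : ℕ) (hj : j ≤ n) :
    ∑ m ∈ Finset.range (n + 1), (n.choose m : ℂ) * (-1) ^ m * poch (-(m : ℂ)) j =
      if j = n then (n.factorial : ℂ) else 0 := by
  simp only [poch_neg_nat]
  rw [range_eq_Ico, ← Finset.sum_Ico_consecutive _ (Nat.zero_le j)
    (by omega : j ≤ n + 1)]
  have h1 : ∑ m ∈ Finset.Ico 0 j, (n.choose m : ℂ) * (-1) ^ m *
      ((-1) ^ j * (m.descFactorial j : ℂ)) = 0 := by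
    apply Finset.sum_eq_zero
    intro m hm
    simp only [Finset.mem_Ico] at hm
    rw [Nat.descFactorial_eq_zero_iff_lt.2 hm.2]
    simp
  rw [h1, zero_add, Finset.sum_Ico_eq_sum_range]
  have h2 : n + 1 - j = (n - j) + 1 := by omega
  rw [h2]
  have h3 : ∀ k ∈ Finset.range (n - j + 1),
      (n.choose (j + k) : ℂ) * (-1) ^ (j + k) * ((-1) ^ j * ((j + k).descFactorial j : ℂ)) =
      (n.descFactorial j : ℂ) * ((-1) ^ k * ((n - j).choose k : ℂ)) := by
    intro k hk
    simp only [Finset.mem_range] at hk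
    have : j + k ≤ n := by omega
    have hnat := nat_key n j k this
    have hc : (n.choose (j + k) : ℂ) * ((j + k).descFactorial j : ℂ) =
        (n.descFactorial j : ℂ) * ((n - j).choose k : ℂ) := by
      exact_mod_cast congrArg (Nat.cast : ℕ → ℂ) hnat
    rw [pow_add]
    calc (n.choose (j + k) : ℂ) * ((-1) ^ j * (-1) ^ k) * ((-1) ^ j * ((j + k).descFactorial j : ℂ))
        = ((n.choose (j + k) : ℂ) * ((j + k).descFactorial j : ℂ)) * ((-1) ^ k * ((-1) ^ j * (-1) ^ j)) := by ring
      _ = (n.descFactorial j : ℂ) * ((-1) ^ k * ((n - j).choose k : ℂ)) := by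
          rw [hc, ← pow_add, ← two_mul, pow_mul]
          ring
  rw [Finset.sum_congr rfl h3, ← Finset.mul_sum, alt_sum]
  rcases eq_or_ne j n with h | h
  · subst h
    simp [Nat.descFactorial_self]
  · rw [if_neg (by omega), if_neg h, mul_zero]

/-- generalized hypergeometric inversion:
`x^n = ([b_s]_n/[a_r]_n) ∑_{m=0}^n C(n,m) (−1)^m F_m(x)` where
`F_m(x) = {}_{r+1}F_s(−m,(a_r);(b_s);x)`. -/
theorem inversion_hypergeometric (n : ℕ) (r s : ℕ) (a : Fin r → ℂ) (b : Fin s → ℂ)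
    (ha : ∀ i, poch (a i) n ≠ 0) (hb : ∀ i j, j ≤ n → poch (b i) j ≠ 0) (x : ℂ) :
    x ^ n =
      ((∏ i, poch (b i) n) / (∏ i, poch (a i) n)) *
        ∑ m ∈ Finset.range (n + 1), (n.choose m : ℂ) * (-1) ^ m *
          (∑ j ∈ Finset.range (m + 1),
            (poch (-(m : ℂ)) j * ∏ i, poch (a i) j) /
              ((∏ i, poch (b i) j) * (Nat.factorial j : ℂ)) * x ^ j) := by
  have hA : (∏ i, poch (a i) n) ≠ 0 := Finset.prod_ne_zero_iff.2 fun i _ => ha i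
  have hB : (∏ i, poch (b i) n) ≠ 0 := Finset.prod_ne_zero_iff.2 fun i _ => hb i n le_rfl
  have hF : (Nat.factorial n : ℂ) ≠ 0 := Nat.cast_ne_zero.2 (Nat.factorial_ne_zero n)
  have hext : ∀ m ∈ Finset.range (n + 1),
      (∑ j ∈ Finset.range (m + 1), (poch (-(m : ℂ)) j * ∏ i, poch (a i) j) /
          ((∏ i, poch (b i) j) * (Nat.factorial j : ℂ)) * x ^ j) =
      ∑ j ∈ Finset.range (n + 1), (poch (-(m : ℂ)) j * ∏ i, poch (a i) j) /
          ((∏ i, poch (b i) j) * (Nat.factorial j : ℂ)) * x ^ j := by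
    intro m hm
    simp only [Finset.mem_range] at hm
    apply Finset.sum_subset (Finset.range_subset_range.2 (by omega))
    intro j _ hj
    simp only [Finset.mem_range, not_lt] at hj
    rw [poch_neg_nat, Nat.descFactorial_eq_zero_iff_lt.2 (by omega)]
    simp
  have hsum :
      (∑ m ∈ Finset.range (n + 1), (n.choose m : ℂ) * (-1) ^ m *
          (∑ j ∈ Finset.range (m + 1), (poch (-(m : ℂ)) j * ∏ i, poch (a i) j) /
              ((∏ i, poch (b i) j) * (Nat.factorial j : ℂ)) * x ^ j)) =
      (∏ i, poch (a i) n) / ((∏ i, poch (b i) n) * (Nat.factorial n : ℂ)) * x ^ n *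
        (Nat.factorial n : ℂ) := by
    calc
      _ = ∑ m ∈ Finset.range (n + 1), ∑ j ∈ Finset.range (n + 1),
            ((∏ i, poch (a i) j) / ((∏ i, poch (b i) j) * (Nat.factorial j : ℂ)) * x ^ j) *
              ((n.choose m : ℂ) * (-1) ^ m * poch (-(m : ℂ)) j) := by
          refine Finset.sum_congr rfl fun m hm => ?_
          rw [hext m hm, Finset.mul_sum]
          refine Finset.sum_congr rfl fun j _ => ?_
          field_simp
      _ = ∑ j ∈ Finset.range (n + 1),
            ((∏ i, poch (a i) j) / ((∏ i, poch (b i) j) * (Nat.factorial j : ℂ)) * x ^ j) *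
              ∑ m ∈ Finset.range (n + 1), ((n.choose m : ℂ) * (-1) ^ m * poch (-(m : ℂ)) j) := by
          rw [Finset.sum_comm]
          exact Finset.sum_congr rfl fun j _ => (Finset.mul_sum _ _ _).symm
      _ = ∑ j ∈ Finset.range (n + 1),
            (if j = n then ((∏ i, poch (a i) j) / ((∏ i, poch (b i) j) * (Nat.factorial j : ℂ)) *
              x ^ j) * (Nat.factorial n : ℂ) else 0) := by
          refine Finset.sum_congr rfl fun j hj => ?_
          simp only [Finset.mem_range] at hj
          rw [key n j (by omega)]
          split <;> simp
      _ = _ := by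
          rw [Finset.sum_ite_eq' (Finset.range (n + 1)) n]
          simp
  rw [hsum]
  field_simp
end

section
/- The generalized Laguerre-type hypergeometric polynomials are self-inverse: defining L̃_n(x) = ((β_1)_n ⋯ (β_s)_n / ((α_1)_n ⋯ (α_r)_n)) · {}_{r+1}F_s(−n,(α_r);(β_s);x), one has for every n the umbral identity ∑_{m=0}^{n} c_{n,m} L̃_m(x) = x^n, where c_{n,m} are exactly the coefficients appearing in the expansion of L̃_n in the monomial basis; i.e., if L̃_n(x) = ∑_{m=0}^n c_{n,m} x^m then also x^n = ∑_{m=0}^n c_{n,m} L̃_m(x). -/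
open Finset

/-- The generalized Laguerre-type hypergeometric polynomial
`L̃_n(x) = ([β_s]_n/[α_r]_n) {}_{r+1}F_s(−n,(α_r);(β_s);x)`. -/
noncomputable def genLag (r s : ℕ) (α : Fin r → ℂ) (β : Fin s → ℂ) (n : ℕ) (x : ℂ) : ℂ :=
  ((∏ i, poch (β i) n) / (∏ i, poch (α i) n)) *
    ∑ j ∈ Finset.range (n + 1),
      (poch (-(n : ℂ)) j * ∏ i, poch (α i) j) /
        ((∏ i, poch (β i) j) * (Nat.factorial j : ℂ)) * x ^ j

/-- Auxiliary: the coefficient of `x^m` in `L̃_n`. -/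
noncomputable def aCoef (r s : ℕ) (α : Fin r → ℂ) (β : Fin s → ℂ) (n m : ℕ) : ℂ :=
  ((∏ i, poch (β i) n) / (∏ i, poch (α i) n)) *
    ((poch (-(n : ℂ)) m * ∏ i, poch (α i) m) /
      ((∏ i, poch (β i) m) * (Nat.factorial m : ℂ)))

lemma genLag_eq_sum (r s : ℕ) (α : Fin r → ℂ) (β : Fin s → ℂ) (n : ℕ) (x : ℂ) :
    genLag r s α β n x = ∑ m ∈ Finset.range (n + 1), aCoef r s α β n m * x ^ m := by
  unfold genLag aCoef
  rw [Finset.mul_sum]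
  refine Finset.sum_congr rfl fun m _ => ?_
  ring

lemma poch_neg_eq_zero {n j : ℕ} (h : n < j) : poch (-(n : ℂ)) j = 0 := by
  unfold poch
  apply Finset.prod_eq_zero (Finset.mem_range.2 h)
  simp

lemma poch_neg_mul {n m : ℕ} (h : m ≤ n) :
    poch (-(n : ℂ)) m * ((n - m).factorial : ℂ) = (-1) ^ m * (n.factorial : ℂ) := by
  induction m with
  | zero => simp [poch]
  | succ m ih =>
    have hm : m ≤ n := Nat.le_of_succ_le h
    have hlt : m < n := h
    have e1 : (n - m).factorial = (n - m) * (n - (m + 1)).factorial := by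
      have : n - m = (n - (m + 1)) + 1 := by omega
      rw [this, Nat.factorial_succ]
    have e2 : poch (-(n : ℂ)) (m + 1) = poch (-(n : ℂ)) m * (-(n : ℂ) + m) := by
      unfold poch
      rw [Finset.prod_range_succ]
    have e3 : (-(n : ℂ) + m) = -(((n - m : ℕ) : ℂ)) := by
      push_cast [Nat.cast_sub hm]
      ring
    have ih' := ih hm
    rw [e1] at ih'
    push_cast at ih'
    rw [e2, e3]
    calc poch (-(n : ℂ)) m * -(((n - m : ℕ) : ℂ)) * ((n - (m + 1)).factorial : ℂ)
        = -(poch (-(n : ℂ)) m * (((n - m : ℕ) : ℂ) * ((n - (m + 1)).factorial : ℂ))) := by ring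
      _ = -((-1) ^ m * (n.factorial : ℂ)) := by rw [ih']
      _ = (-1) ^ (m + 1) * (n.factorial : ℂ) := by ring

lemma poch_neg_div {n m : ℕ} (h : m ≤ n) :
    poch (-(n : ℂ)) m = (-1) ^ m * (n.factorial : ℂ) / ((n - m).factorial : ℂ) := by
  have hne : ((n - m).factorial : ℂ) ≠ 0 := Nat.cast_ne_zero.2 (Nat.factorial_ne_zero _)
  field_simp
  exact poch_neg_mul h

lemma aCoef_eq_zero (r s : ℕ) (α : Fin r → ℂ) (β : Fin s → ℂ) {n m : ℕ} (h : n < m) :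
    aCoef r s α β n m = 0 := by
  simp [aCoef, poch_neg_eq_zero h]

lemma aux_mul (m j n : ℕ) (An Am Aj Bn Bm Bj : ℂ)
    (hAm : Am ≠ 0) (hBm : Bm ≠ 0) :
    (Bn / An) * (((-1) ^ m * (n.factorial : ℂ) / ((n - m).factorial : ℂ)) * Am / (Bm * (m.factorial : ℂ))) *
    ((Bm / Am) * (((-1) ^ j * (m.factorial : ℂ) / ((m - j).factorial : ℂ)) * Aj / (Bj * (j.factorial : ℂ)))) =
      (Bn * Aj) / (An * Bj) *
      ((-1) ^ m * (-1) ^ j * ((n.factorial : ℂ) / ((m.factorial : ℂ) * ((n - m).factorial : ℂ))) *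
        ((m.factorial : ℂ) / ((j.factorial : ℂ) * ((m - j).factorial : ℂ)))) := by
  calc (Bn / An) * (((-1) ^ m * (n.factorial : ℂ) / ((n - m).factorial : ℂ)) * Am / (Bm * (m.factorial : ℂ))) *
    ((Bm / Am) * (((-1) ^ j * (m.factorial : ℂ) / ((m - j).factorial : ℂ)) * Aj / (Bj * (j.factorial : ℂ))))
      = ((Am * Am⁻¹) * (Bm * Bm⁻¹)) *
        ((Bn * Aj) / (An * Bj) *
        ((-1) ^ m * (-1) ^ j * ((n.factorial : ℂ) / ((m.factorial : ℂ) * ((n - m).factorial : ℂ))) *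
          ((m.factorial : ℂ) / ((j.factorial : ℂ) * ((m - j).factorial : ℂ))))) := by ring
    _ = _ := by rw [mul_inv_cancel₀ hAm, mul_inv_cancel₀ hBm]; ring

lemma aCoef_mul (r s : ℕ) (α : Fin r → ℂ) (β : Fin s → ℂ)
    (hα : ∀ i n, poch (α i) n ≠ 0) (hβ : ∀ i n, poch (β i) n ≠ 0)
    {j m n : ℕ} (hjm : j ≤ m) (hmn : m ≤ n) :
    aCoef r s α β n m * aCoef r s α β m j =
      ((∏ i, poch (β i) n) * (∏ i, poch (α i) j)) /
        ((∏ i, poch (α i) n) * (∏ i, poch (β i) j)) *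
      ((-1) ^ m * (-1) ^ j * (n.choose m : ℂ) * (m.choose j : ℂ)) := by
  have hAn : (∏ i, poch (α i) n) ≠ 0 := Finset.prod_ne_zero_iff.2 fun i _ => hα i n
  have hAm : (∏ i, poch (α i) m) ≠ 0 := Finset.prod_ne_zero_iff.2 fun i _ => hα i m
  have hAj : (∏ i, poch (α i) j) ≠ 0 := Finset.prod_ne_zero_iff.2 fun i _ => hα i j
  have hBn : (∏ i, poch (β i) n) ≠ 0 := Finset.prod_ne_zero_iff.2 fun i _ => hβ i n
  have hBm : (∏ i, poch (β i) m) ≠ 0 := Finset.prod_ne_zero_iff.2 fun i _ => hβ i m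
  have hBj : (∏ i, poch (β i) j) ≠ 0 := Finset.prod_ne_zero_iff.2 fun i _ => hβ i j
  have hf : ∀ k : ℕ, ((k.factorial : ℂ)) ≠ 0 := fun k =>
    Nat.cast_ne_zero.2 (Nat.factorial_ne_zero _)
  unfold aCoef
  rw [poch_neg_div hmn, poch_neg_div hjm,
    Nat.cast_choose ℂ hmn, Nat.cast_choose ℂ hjm]
  exact aux_mul m j n _ _ _ _ _ _ hAm hBm

lemma key_sum (r s : ℕ) (α : Fin r → ℂ) (β : Fin s → ℂ)
    (hα : ∀ i n, poch (α i) n ≠ 0) (hβ : ∀ i n, poch (β i) n ≠ 0)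
    {n j : ℕ} (hj : j ≤ n) :
    ∑ m ∈ Finset.range (n + 1), aCoef r s α β n m * aCoef r s α β m j =
      if j = n then 1 else 0 := by
  have hAn : (∏ i, poch (α i) n) ≠ 0 := Finset.prod_ne_zero_iff.2 fun i _ => hα i n
  have hBn : (∏ i, poch (β i) n) ≠ 0 := Finset.prod_ne_zero_iff.2 fun i _ => hβ i n
  -- drop the vanishing terms m < j
  have hzero : ∀ m, m < j → aCoef r s α β n m * aCoef r s α β m j = 0 := by
    intro m hm
    rw [aCoef_eq_zero r s α β hm, mul_zero]
  rw [Finset.range_eq_Ico, ← Finset.sum_Ico_consecutive _ (Nat.zero_le j) (by omega : j ≤ n + 1)]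
  rw [Finset.sum_eq_zero (fun m hm => hzero m (Finset.mem_Ico.1 hm).2), zero_add]
  rw [Finset.sum_Ico_eq_sum_range]
  have hterm : ∀ k, k < n + 1 - j →
      aCoef r s α β n (j + k) * aCoef r s α β (j + k) j =
        ((∏ i, poch (β i) n) * (∏ i, poch (α i) j)) /
          ((∏ i, poch (α i) n) * (∏ i, poch (β i) j)) *
        ((n.choose j : ℂ) * ((-1) ^ k * ((n - j).choose k : ℂ))) := by
    intro k hk
    have h1 : j ≤ j + k := Nat.le_add_right _ _
    have h2 : j + k ≤ n := by omega
    rw [aCoef_mul r s α β hα hβ h1 h2]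
    have hch : (n.choose (j + k)) * ((j + k).choose j) = n.choose j * (n - j).choose k := by
      rw [Nat.choose_mul h1]
      congr 1
      congr 1
      omega
    have hsign : ((-1 : ℂ)) ^ (j + k) * (-1) ^ j = (-1) ^ k := by
      rw [pow_add]
      rw [show (-1 : ℂ) ^ j * (-1) ^ k * (-1) ^ j = ((-1) ^ j * (-1) ^ j) * (-1) ^ k by ring,
        ← pow_add, ← two_mul, pow_mul]
      norm_num
    have hchC : ((n.choose (j + k) : ℂ)) * ((j + k).choose j : ℂ) =
        (n.choose j : ℂ) * ((n - j).choose k : ℂ) := by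
      exact_mod_cast hch
    calc ((∏ i, poch (β i) n) * ∏ i, poch (α i) j) /
          ((∏ i, poch (α i) n) * ∏ i, poch (β i) j) *
        ((-1) ^ (j + k) * (-1) ^ j * (n.choose (j + k) : ℂ) * ((j + k).choose j : ℂ))
        = ((∏ i, poch (β i) n) * ∏ i, poch (α i) j) /
          ((∏ i, poch (α i) n) * ∏ i, poch (β i) j) *
          (((-1) ^ (j + k) * (-1) ^ j) *
            ((n.choose (j + k) : ℂ) * ((j + k).choose j : ℂ))) := by ring
      _ = _ := by rw [hsign, hchC]; ring
  rw [Finset.sum_congr rfl (fun k hk => hterm k (Finset.mem_range.1 hk)), ← Finset.mul_sum,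
    ← Finset.mul_sum]
  have halt : ∑ k ∈ Finset.range (n + 1 - j), ((-1 : ℂ)) ^ k * ((n - j).choose k : ℂ) =
      if n - j = 0 then 1 else 0 := by
    have hrange : n + 1 - j = (n - j) + 1 := by omega
    rw [hrange]
    have := Int.alternating_sum_range_choose (n := n - j)
    have := congrArg (fun z : ℤ => (z : ℂ)) this
    push_cast at this
    rw [this]
  rw [halt]
  by_cases hjn : j = n
  · subst hjn
    simp only [Nat.sub_self, if_pos rfl, if_pos rfl]
    rw [Nat.choose_self, mul_comm ((∏ i, poch (β i) j)) _,
      div_self (mul_ne_zero hAn hBn)]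
    norm_num
  · have : n - j ≠ 0 := by omega
    rw [if_neg this, if_neg hjn]
    ring

/-- From a polynomial-functional identity, extract equality of coefficients. -/
lemma coeff_eq {N : ℕ} {f g : ℕ → ℂ}
    (h : ∀ x : ℂ, ∑ m ∈ Finset.range N, f m * x ^ m = ∑ m ∈ Finset.range N, g m * x ^ m)
    {m : ℕ} (hm : m < N) : f m = g m := by
  have hP : (∑ k ∈ Finset.range N, Polynomial.C (f k) * Polynomial.X ^ k : Polynomial ℂ) =
      ∑ k ∈ Finset.range N, Polynomial.C (g k) * Polynomial.X ^ k := by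
    apply Polynomial.funext
    intro x
    simpa [Polynomial.eval_finset_sum] using h x
  have := congrArg (fun p : Polynomial ℂ => p.coeff m) hP
  simpa [Polynomial.finset_sum_coeff, Polynomial.coeff_C_mul, Polynomial.coeff_X_pow,
    Finset.sum_ite_eq, hm] using this

/-- the generalized Laguerre-type polynomials are self-inverse:
if `L̃_n(x) = ∑_{m=0}^n c_{n,m} x^m` then `x^n = ∑_{m=0}^n c_{n,m} L̃_m(x)`. -/
theorem genLag_self_inverse (r s : ℕ) (α : Fin r → ℂ) (β : Fin s → ℂ)
    (hα : ∀ i n, poch (α i) n ≠ 0) (hβ : ∀ i n, poch (β i) n ≠ 0)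
    (c : ℕ → ℕ → ℂ)
    (hc : ∀ n x, genLag r s α β n x = ∑ m ∈ Finset.range (n + 1), c n m * x ^ m) :
    ∀ n x, x ^ n = ∑ m ∈ Finset.range (n + 1), c n m * genLag r s α β m x := by
  intro n x
  have hcoef : ∀ n' m, m < n' + 1 → c n' m = aCoef r s α β n' m := by
    intro n' m hm
    refine coeff_eq (fun x => ?_) hm
    rw [← hc n' x, genLag_eq_sum]
  symm
  calc (∑ m ∈ Finset.range (n + 1), c n m * genLag r s α β m x)
      = ∑ m ∈ Finset.range (n + 1), aCoef r s α β n m *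
          ∑ j ∈ Finset.range (n + 1), aCoef r s α β m j * x ^ j := by
        refine Finset.sum_congr rfl fun m hm => ?_
        rw [hcoef n m (Finset.mem_range.1 hm), genLag_eq_sum]
        congr 1
        refine Finset.sum_subset ?_ ?_
        · intro j hj
          rw [Finset.mem_range] at *
          omega
        · intro j _ hj
          rw [Finset.mem_range, not_lt] at hj
          rw [aCoef_eq_zero r s α β (by omega : m < j), zero_mul]
    _ = ∑ j ∈ Finset.range (n + 1),
          (∑ m ∈ Finset.range (n + 1), aCoef r s α β n m * aCoef r s α β m j) * x ^ j := by
        simp_rw [Finset.mul_sum, Finset.sum_mul]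
        rw [Finset.sum_comm]
        refine Finset.sum_congr rfl fun j _ => Finset.sum_congr rfl fun m _ => by ring
    _ = ∑ j ∈ Finset.range (n + 1), (if j = n then 1 else 0 : ℂ) * x ^ j := by
        refine Finset.sum_congr rfl fun j hj => ?_
        rw [key_sum r s α β hα hβ (Nat.lt_succ_iff.1 (Finset.mem_range.1 hj))]
    _ = x ^ n := by
        rw [Finset.sum_congr rfl
          (fun j _ => by split <;> simp :
            ∀ j ∈ Finset.range (n + 1),
              (if j = n then 1 else 0 : ℂ) * x ^ j = if j = n then x ^ j else 0),
          Finset.sum_ite_eq' (Finset.range (n + 1)) n (fun j => x ^ j)]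
        simp
end
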